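/- Let nonnegative sequences (A_t), (B_t) satisfy A_{t+1} ≤ (1 − a)A_t + c₁B_t and B_{t+1} ≤ (1 − b)B_t + c₂A_t + e, with a, b ∈ (0,1), c₁, c₂, e ≥ 0 and c₁c₂ ≤ ab/4. Then the Lyapunov function V_t = A_t + (2c₁/b)B_t satisfies V_{t+1} ≤ (1 − min{a,b}/2)V_t + (2c₁/b)e for all t, and hence V_t ≤ V_0 (1 − min{a,b}/2)^t + (4c₁ e)/(b·min{a,b}). -/

import Mathlib

/-- Let nonnegative sequences `(A_t)`, `(B_t)` satisfy
`A_{t+1} ≤ (1 − a)A_t + c₁B_t` and `B_{t+1} ≤ (1 − b)B_t + c₂A_t + e`, with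
`a, b ∈ (0,1)`, `c₁, c₂, e ≥ 0` and `c₁c₂ ≤ ab/4`. Then
`V_t = A_t + (2c₁/b)B_t` satisfies `V_{t+1} ≤ (1 − min{a,b}/2)V_t + (2c₁/b)e`, and
hence `V_t ≤ V_0 (1 − min{a,b}/2)^t + (4c₁e)/(b·min{a,b})`. -/
theorem coupled_recursion_lyapunov
    (A B : ℕ → ℝ) (a b c₁ c₂ e : ℝ)
    (hA : ∀ t, 0 ≤ A t) (hB : ∀ t, 0 ≤ B t)
    (ha0 : 0 < a) (ha1 : a < 1) (hb0 : 0 < b) (hb1 : b < 1)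
    (hc₁ : 0 ≤ c₁) (hc₂ : 0 ≤ c₂) (he : 0 ≤ e)
    (hcc : c₁ * c₂ ≤ a * b / 4)
    (hrecA : ∀ t, A (t + 1) ≤ (1 - a) * A t + c₁ * B t)
    (hrecB : ∀ t, B (t + 1) ≤ (1 - b) * B t + c₂ * A t + e) :
    (∀ t, A (t + 1) + (2 * c₁ / b) * B (t + 1) ≤
        (1 - min a b / 2) * (A t + (2 * c₁ / b) * B t) + (2 * c₁ / b) * e) ∧
    (∀ t, A t + (2 * c₁ / b) * B t ≤
        (A 0 + (2 * c₁ / b) * B 0) * (1 - min a b / 2) ^ t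
          + 4 * c₁ * e / (b * min a b)) := by
  set κ := 2 * c₁ / b with hκ
  have hκ0 : 0 ≤ κ := by positivity
  set m := min a b with hm
  have hm0 : 0 < m := lt_min ha0 hb0
  have hma : m ≤ a := min_le_left _ _
  have hmb : m ≤ b := min_le_right _ _
  have hq0 : 0 ≤ 1 - m / 2 := by
    have : m < 1 := lt_of_le_of_lt hma ha1
    linarith
  have hcoA : 1 - a + κ * c₂ ≤ 1 - m / 2 := by
    have h1 : κ * c₂ ≤ a / 2 := by
      have h2 : 2 * (c₁ * c₂) / b ≤ 2 * (a * b / 4) / b := by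
        apply div_le_div_of_nonneg_right _ hb0.le
        linarith
      calc κ * c₂ = 2 * (c₁ * c₂) / b := by rw [hκ]; field_simp
        _ ≤ 2 * (a * b / 4) / b := h2
        _ = a / 2 := by field_simp; ring
    linarith
  have hcoB : c₁ + κ * (1 - b) ≤ (1 - m / 2) * κ := by
    have hκb : κ * b = 2 * c₁ := by rw [hκ]; field_simp
    have h1 : κ * (m / 2) ≤ κ * (b / 2) := by
      apply mul_le_mul_of_nonneg_left _ hκ0; linarith
    nlinarith
  have hstep : ∀ t, A (t + 1) + κ * B (t + 1) ≤
      (1 - m / 2) * (A t + κ * B t) + κ * e := by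
    intro t
    have h1 := hrecA t
    have h2' : κ * B (t + 1) ≤ κ * ((1 - b) * B t + c₂ * A t + e) :=
      mul_le_mul_of_nonneg_left (hrecB t) hκ0
    have hA' : (1 - a + κ * c₂) * A t ≤ (1 - m / 2) * A t :=
      mul_le_mul_of_nonneg_right hcoA (hA t)
    have hB' : (c₁ + κ * (1 - b)) * B t ≤ ((1 - m / 2) * κ) * B t :=
      mul_le_mul_of_nonneg_right hcoB (hB t)
    nlinarith
  refine ⟨hstep, ?_⟩
  have hK : (1 - m / 2) * (4 * c₁ * e / (b * m)) + κ * e = 4 * c₁ * e / (b * m) := by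
    rw [hκ]
    field_simp
    ring
  intro t
  induction t with
  | zero =>
      simp
      have : 0 ≤ 4 * c₁ * e / (b * m) := by positivity
      linarith
  | succ n ih =>
      calc A (n + 1) + κ * B (n + 1)
          ≤ (1 - m / 2) * (A n + κ * B n) + κ * e := hstep n
        _ ≤ (1 - m / 2) * ((A 0 + κ * B 0) * (1 - m / 2) ^ n
              + 4 * c₁ * e / (b * m)) + κ * e := by
            linarith [mul_le_mul_of_nonneg_left ih hq0]
        _ = (A 0 + κ * B 0) * (1 - m / 2) ^ (n + 1) + 4 * c₁ * e / (b * m) := by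
            rw [mul_add, mul_comm ((1:ℝ) - m / 2), mul_assoc, ← pow_succ]
            linarith [hK]
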